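/- Let V be a 4-dimensional real vector space with nondegenerate-on-quotient symmetric form h whose radical is spanned by ξ ≠ 0. Suppose C : V × V → V is a symmetric bilinear map (C^a_{bc} = C^a_{cb}) satisfying: (i) C(v,ξ) = 0 for all v ∈ V, and (ii) h(C(v,w),u) + h(C(v,u),w) = 0 for all u,v,w ∈ V. Then h(C(v,w),u) = 0 for all u,v,w ∈ V; consequently, fixing t ∈ V* with t(ξ)=1, C(v,w) = κ(h(v,·),h(w,·))·ξ where κ is the symmetric bilinear form on V* defined by κ(α,β) = t(C(v',w')) for any v',w' with appropriate projections. In particular C(v,w) is always a multiple of ξ. -/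

import Mathlib

set_option synthInstance.maxHeartbeats 1000000
set_option maxHeartbeats 1000000


/-- Proposition 4, core computation: a symmetric bilinear map C (the difference
tensor between two Carroll-compatible derivative operators) satisfying
C(v,ξ)=0 and h(C(v,w),u) + h(C(v,u),w) = 0 has vanishing lowered components
h(C(v,w),u), and hence takes the form C(v,w) = κ(h(v,·),h(w,·))·ξ for a
symmetric bilinear form κ on V*; in particular C(v,w) is always a multiple of ξ. -/
theorem difference_tensor_form
    (V : Type*) [AddCommGroup V] [Module ℝ V]
    (hdim : Module.finrank ℝ V = 4)
    (h : V →ₗ[ℝ] V →ₗ[ℝ] ℝ)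
    (hsymm : ∀ v w, h v w = h w v)
    (ξ : V) (hξ0 : ξ ≠ 0)
    -- the radical of h is spanned by ξ:
    (hrad : ∀ v : V, h v = 0 ↔ ∃ α : ℝ, v = α • ξ)
    (t : Module.Dual ℝ V) (htξ : t ξ = 1)
    (C : V →ₗ[ℝ] V →ₗ[ℝ] V)
    (hCsymm : ∀ v w, C v w = C w v)
    (hC1 : ∀ v, C v ξ = 0)
    (hC2 : ∀ u v w, h (C v w) u + h (C v u) w = 0) :
    (∀ u v w, h (C v w) u = 0) ∧
    (∃ κ : Module.Dual ℝ V →ₗ[ℝ] Module.Dual ℝ V →ₗ[ℝ] ℝ,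
      (∀ σ τ, κ σ τ = κ τ σ) ∧
      (∀ v w, C v w = κ (h v) (h w) • ξ)) ∧
    (∀ v w, ∃ α : ℝ, C v w = α • ξ) := by
  classical
  have key : ∀ u v w, h (C v w) u = 0 := by
    intro u v w
    have A : ∀ a b c : V, h (C a b) c = - h (C a c) b := by
      intro a b c; have := hC2 c a b; linarith
    have S : ∀ a b c : V, h (C a b) c = h (C b a) c := by
      intro a b c; rw [hCsymm]
    have e1 := A v w u
    have e2 := S v u w
    have e3 := A u v w
    have e4 := S u w v
    have e5 := A w u v
    have e6 := S w v u
    linarith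
  have hCξ' : ∀ w, C ξ w = 0 := fun w => by rw [hCsymm]; exact hC1 w
  have hmul : ∀ v w, C v w = t (C v w) • ξ := by
    intro v w
    have h0 : h (C v w) = 0 := LinearMap.ext fun u => key u v w
    obtain ⟨α, hα⟩ := (hrad _).mp h0
    rw [hα, map_smul, htξ, smul_eq_mul, mul_one]
  -- construct a linear section s of h on its range
  obtain ⟨q, hq⟩ := Submodule.exists_isCompl (LinearMap.range h)
  haveI : Module.Projective ℝ (LinearMap.range h) :=
    @Module.Projective.of_free _ _ _ _ _
      (Module.Free.of_basis (Module.Basis.ofVectorSpace ℝ (LinearMap.range h)))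
  obtain ⟨p, hp⟩ := h.rangeRestrict.exists_rightInverse_of_surjective
    (LinearMap.range_eq_top.mpr h.surjective_rangeRestrict)
  set s : Module.Dual ℝ V →ₗ[ℝ] V :=
    p ∘ₗ ((LinearMap.range h).linearProjOfIsCompl q hq) with hs
  have hsh : ∀ v : V, h (s (h v)) = h v := by
    intro v
    have h1 : ((LinearMap.range h).linearProjOfIsCompl q hq) (h v)
        = ⟨h v, LinearMap.mem_range_self h v⟩ :=
      Submodule.linearProjOfIsCompl_apply_left hq ⟨h v, LinearMap.mem_range_self h v⟩
    have h2 := congrArg (fun f => (f (⟨h v, LinearMap.mem_range_self h v⟩ :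
      LinearMap.range h)).1) hp
    simp only [LinearMap.coe_comp, Function.comp_apply, LinearMap.id_coe, id_eq] at h2
    simp only [hs, LinearMap.coe_comp, Function.comp_apply, h1]
    exact h2
  have hCs : ∀ v w : V, C (s (h v)) (s (h w)) = C v w := by
    intro v w
    have d1 : h (s (h v) - v) = 0 := by rw [map_sub, hsh, sub_self]
    have d2 : h (s (h w) - w) = 0 := by rw [map_sub, hsh, sub_self]
    obtain ⟨a, ha⟩ := (hrad _).mp d1
    obtain ⟨b, hb⟩ := (hrad _).mp d2
    have hv' : s (h v) = v + a • ξ := by rw [← ha]; abel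
    have hw' : s (h w) = w + b • ξ := by rw [← hb]; abel
    rw [hv', hw']
    simp [map_add, map_smul, hC1, hCξ']
  set κ : Module.Dual ℝ V →ₗ[ℝ] Module.Dual ℝ V →ₗ[ℝ] ℝ :=
    (C.compr₂ t).compl₁₂ s s with hκ
  have hκapp : ∀ σ τ, κ σ τ = t (C (s σ) (s τ)) := fun σ τ => rfl
  refine ⟨key, ⟨κ, ?_, ?_⟩, fun v w => ⟨t (C v w), hmul v w⟩⟩
  · intro σ τ; rw [hκapp, hκapp, hCsymm]
  · intro v w
    rw [hκapp, hCs]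
    exact hmul v w
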